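/- Let 0 ≤ α_l < α_h ≤ 1 and q ∈ [0,1]. There exist real constants k > 0 and C, both independent of the partition U, such that for every measurable partition U = {D_n, D_p} of ℝ^m: E_I(U; δ(q)) = k·E(U;q) + C. Explicitly one may take k = (α_h - α_l) / ((α_l+α_h)(1-q) + (2-α_l-α_h)q). In particular, the objective functions E(·;q) and E_I(·;δ(q)) have exactly the same minimizers. -/

import Mathlib

open MeasureTheory Set

/-- For `0 ≤ α_l < α_h ≤ 1` and `q ∈ [0,1]`, there exist constants `k > 0`
(explicitly `k = (α_h - α_l)/((α_l+α_h)(1-q) + (2-α_l-α_h)q)`) and `C`, independent of the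
partition, such that `E_I(U; δ(q)) = k·E(U;q) + C` for every measurable partition
`U = {Dn, Dp}`; in particular `E(·;q)` and `E_I(·;δ(q))` have exactly the same minimizers. -/
theorem stmt_7 {m : ℕ} (N P : (Fin m → ℝ) → ℝ)
    (hNmeas : Measurable N) (hPmeas : Measurable P)
    (hNnonneg : ∀ r, 0 ≤ N r) (hPnonneg : ∀ r, 0 ≤ P r)
    (hNint : ∫ r, N r = 1) (hPint : ∫ r, P r = 1)
    (αl αh : ℝ) (hαl : 0 ≤ αl) (hlh : αl < αh) (hαh : αh ≤ 1)
    (Ql Qh : (Fin m → ℝ) → ℝ)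
    (hQl : ∀ r, Ql r = αl * P r + (1 - αl) * N r)
    (hQh : ∀ r, Qh r = αh * P r + (1 - αh) * N r)
    (δ : ℝ → ℝ)
    (hδ : ∀ q', δ q' = (q' * (1 - αl) + (1 - q') * αl)
      / ((αl + αh) * (1 - q') + (2 - αl - αh) * q'))
    (q : ℝ) (hq : q ∈ Set.Icc (0 : ℝ) 1) :
    0 < (αh - αl) / ((αl + αh) * (1 - q) + (2 - αl - αh) * q)
    ∧ (∃ C : ℝ, ∀ Dn Dp : Set (Fin m → ℝ), MeasurableSet Dn → MeasurableSet Dp →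
        Dn ∪ Dp = Set.univ → Dn ∩ Dp = ∅ →
        (1 - δ q) * (∫ r in Dp, Ql r) + δ q * (∫ r in Dn, Qh r)
          = ((αh - αl) / ((αl + αh) * (1 - q) + (2 - αl - αh) * q))
              * ((1 - q) * (∫ r in Dp, N r) + q * (∫ r in Dn, P r)) + C)
    ∧ (∀ Dn Dp : Set (Fin m → ℝ), MeasurableSet Dn → MeasurableSet Dp →
        Dn ∪ Dp = Set.univ → Dn ∩ Dp = ∅ →
        ((∀ Dn' Dp' : Set (Fin m → ℝ), MeasurableSet Dn' → MeasurableSet Dp' →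
            Dn' ∪ Dp' = Set.univ → Dn' ∩ Dp' = ∅ →
            (1 - q) * (∫ r in Dp, N r) + q * (∫ r in Dn, P r)
              ≤ (1 - q) * (∫ r in Dp', N r) + q * (∫ r in Dn', P r))
          ↔ (∀ Dn' Dp' : Set (Fin m → ℝ), MeasurableSet Dn' → MeasurableSet Dp' →
            Dn' ∪ Dp' = Set.univ → Dn' ∩ Dp' = ∅ →
            (1 - δ q) * (∫ r in Dp, Ql r) + δ q * (∫ r in Dn, Qh r)
              ≤ (1 - δ q) * (∫ r in Dp', Ql r) + δ q * (∫ r in Dn', Qh r)))) := by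
  obtain ⟨hq0, hq1⟩ := hq
  set D : ℝ := (αl + αh) * (1 - q) + (2 - αl - αh) * q with hD
  have hDpos : 0 < D := by
    have h1 : 0 < αl + αh := by linarith
    have h2 : 0 < 2 - αl - αh := by linarith
    rcases lt_or_ge q 1 with h | h
    · have := mul_pos h1 (by linarith : (0:ℝ) < 1 - q)
      nlinarith [mul_nonneg h2.le hq0]
    · have hq1' : q = 1 := le_antisymm hq1 h
      simp [hD, hq1']
      linarith
  have hDne : D ≠ 0 := ne_of_gt hDpos
  set k : ℝ := (αh - αl) / D with hk
  have hkpos : 0 < k := div_pos (by linarith) hDpos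
  -- integrability
  have hNI : Integrable N := by
    by_contra h
    rw [integral_undef h] at hNint
    norm_num at hNint
  have hPI : Integrable P := by
    by_contra h
    rw [integral_undef h] at hPint
    norm_num at hPint
  -- splitting lemma
  have split : ∀ (f : (Fin m → ℝ) → ℝ), Integrable f → ∀ Dn Dp : Set (Fin m → ℝ),
      MeasurableSet Dn → MeasurableSet Dp → Dn ∪ Dp = Set.univ → Dn ∩ Dp = ∅ →
      (∫ r in Dn, f r) + (∫ r in Dp, f r) = ∫ r, f r := by
    intro f hf Dn Dp hDn hDp hU hI
    have hdisj : Disjoint Dn Dp := Set.disjoint_iff_inter_eq_empty.mpr hI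
    rw [← setIntegral_union hdisj hDp hf.integrableOn hf.integrableOn, hU,
      setIntegral_univ]
  -- the key equality
  set C : ℝ := (1 - δ q) * αl + δ q * (1 - αh) with hC
  have key : ∀ Dn Dp : Set (Fin m → ℝ), MeasurableSet Dn → MeasurableSet Dp →
      Dn ∪ Dp = Set.univ → Dn ∩ Dp = ∅ →
      (1 - δ q) * (∫ r in Dp, Ql r) + δ q * (∫ r in Dn, Qh r)
        = k * ((1 - q) * (∫ r in Dp, N r) + q * (∫ r in Dn, P r)) + C := by
    intro Dn Dp hDn hDp hU hI
    have hQlint : (∫ r in Dp, Ql r) = αl * (∫ r in Dp, P r) + (1 - αl) * (∫ r in Dp, N r) := by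
      simp_rw [hQl]
      rw [integral_add ((hPI.const_mul αl).integrableOn)
        ((hNI.const_mul (1 - αl)).integrableOn), integral_const_mul, integral_const_mul]
    have hQhint : (∫ r in Dn, Qh r) = αh * (∫ r in Dn, P r) + (1 - αh) * (∫ r in Dn, N r) := by
      simp_rw [hQh]
      rw [integral_add ((hPI.const_mul αh).integrableOn)
        ((hNI.const_mul (1 - αh)).integrableOn), integral_const_mul, integral_const_mul]
    have hNsplit := split N hNI Dn Dp hDn hDp hU hI
    have hPsplit := split P hPI Dn Dp hDn hDp hU hI
    rw [hNint] at hNsplit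
    rw [hPint] at hPsplit
    set a := ∫ r in Dn, N r
    set b := ∫ r in Dp, N r
    set c := ∫ r in Dn, P r
    set d := ∫ r in Dp, P r
    have ha : a = 1 - b := by linarith
    have hd : d = 1 - c := by linarith
    rw [hQlint, hQhint, ha, hd, hC, hk, hδ q]
    rw [← hD]
    field_simp
    ring
  refine ⟨hkpos, ⟨C, key⟩, ?_⟩
  intro Dn Dp hDn hDp hU hI
  constructor
  · intro h Dn' Dp' hDn' hDp' hU' hI'
    rw [key Dn Dp hDn hDp hU hI, key Dn' Dp' hDn' hDp' hU' hI']
    have := h Dn' Dp' hDn' hDp' hU' hI'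
    nlinarith
  · intro h Dn' Dp' hDn' hDp' hU' hI'
    have h2 := h Dn' Dp' hDn' hDp' hU' hI'
    rw [key Dn Dp hDn hDp hU hI, key Dn' Dp' hDn' hDp' hU' hI'] at h2
    nlinarith
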